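/- Let A be a real d×d matrix and suppose ℝ^d = E_u ⊕ E_s ⊕ E_c with projections Π_u, Π_s, Π_c, and c > 0, such that for all x ∈ ℝ^d: (R x)·(Π_u x) ≥ c|Π_u x|² when x ∈ E_u, (R x)·(Π_s x) ≤ −c|Π_s x|² when x ∈ E_s, and R x = 0 for x ∈ E_c, where R = A. Let h : [0,T] → ℝ^d be C¹ and satisfy dh/dt = R h(t) + g(t) where |g(t)| ≤ κ|h(t)| with κ < c/4 sufficiently small. Define Φ(t) = |Π_u h(t)|² − |Π_s h(t)|² − |Π_c h(t)|². If Φ(0) > 0, then Φ(t) ≥ e^{c t/2} Φ(0) for all t ∈ [0,T] such that Φ remains positive on [0,t]; consequently |Π_u h(t)|² ≥ e^{ct/2}Φ(0) on that interval. -/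

import Mathlib

open scoped RealInnerProductSpace


private lemma stmt18_aux {c k nu nv nw nh ru rv iu iv iw gn : ℝ}
    (hc : 0 < c) (hk0 : 0 ≤ k) (hk : k ≤ c / 8)
    (hnu : 0 ≤ nu) (hnv : 0 ≤ nv) (hnw : 0 ≤ nw) (hnh : 0 ≤ nh)
    (hpos : 0 < nu ^ 2 - nv ^ 2 - nw ^ 2)
    (hdec : nh ^ 2 = nu ^ 2 + nv ^ 2 + nw ^ 2)
    (hgn : gn ≤ k * nh) (hgn0 : 0 ≤ gn)
    (hru : c * nu ^ 2 ≤ ru) (hrv : rv ≤ -c * nv ^ 2)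
    (hiu : |iu| ≤ gn * nu) (hiv : |iv| ≤ gn * nv) (hiw : |iw| ≤ gn * nw) :
    c / 2 * (nu ^ 2 - nv ^ 2 - nw ^ 2) ≤ 2 * (ru + iu) - 2 * (rv + iv) - 2 * iw := by
  have hH : nh ≤ 2 * nu := by nlinarith
  have hvu : nv ≤ nu := by nlinarith
  have hwu : nw ≤ nu := by nlinarith
  have hgu : gn ≤ 2 * k * nu := by nlinarith
  have e1 := abs_le.mp hiu
  have e2 := abs_le.mp hiv
  have e3 := abs_le.mp hiw
  have f1 : gn * nu ≤ 2 * k * nu * nu := mul_le_mul_of_nonneg_right hgu hnu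
  have f2 : gn * nv ≤ 2 * k * nu * nu := mul_le_mul hgu hvu hnv (by positivity)
  have f3 : gn * nw ≤ 2 * k * nu * nu := mul_le_mul hgu hwu hnw (by positivity)
  have f4 : k * (nu * nu) ≤ c / 8 * (nu * nu) :=
    mul_le_mul_of_nonneg_right hk (mul_nonneg hnu hnu)
  nlinarith [sq_nonneg nv, sq_nonneg nw]

theorem stmt18 (d : ℕ) (c : ℝ) (hc : 0 < c)
    (R Pu Ps Pc : EuclideanSpace ℝ (Fin d) →L[ℝ] EuclideanSpace ℝ (Fin d))
    -- `Pu, Ps, Pc` are the orthogonal projections of a decomposition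
    -- `ℝ^d = E_u ⊕ E_s ⊕ E_c`
    (hsum : Pu + Ps + Pc = ContinuousLinearMap.id ℝ (EuclideanSpace ℝ (Fin d)))
    (hPu : Pu ∘L Pu = Pu) (hPs : Ps ∘L Ps = Ps) (hPc : Pc ∘L Pc = Pc)
    (hus : Pu ∘L Ps = 0) (huc : Pu ∘L Pc = 0) (hsc : Ps ∘L Pc = 0)
    (hsu : Ps ∘L Pu = 0) (hcu : Pc ∘L Pu = 0) (hcs : Pc ∘L Ps = 0)
    (hPusa : ∀ x y, (inner ℝ (Pu x) y : ℝ) = (inner ℝ x (Pu y) : ℝ))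
    (hPssa : ∀ x y, (inner ℝ (Ps x) y : ℝ) = (inner ℝ x (Ps y) : ℝ))
    (hPcsa : ∀ x y, (inner ℝ (Pc x) y : ℝ) = (inner ℝ x (Pc y) : ℝ))
    -- `R` respects the decomposition
    (hRu : R ∘L Pu = Pu ∘L R) (hRs : R ∘L Ps = Ps ∘L R) (hRc : R ∘L Pc = Pc ∘L R)
    -- coercivity on `E_u`, dissipativity on `E_s`, and `R = 0` on `E_c`
    (hu : ∀ x, c * ‖Pu x‖ ^ 2 ≤ (inner ℝ (R (Pu x)) (Pu x) : ℝ))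
    (hs : ∀ x, (inner ℝ (R (Ps x)) (Ps x) : ℝ) ≤ -c * ‖Ps x‖ ^ 2)
    (hcz : ∀ x, R (Pc x) = 0) :
    -- for `κ < c/4` sufficiently small, the cone functional
    -- `Φ(t) = ‖Pu h‖² − ‖Ps h‖² − ‖Pc h‖²` grows exponentially
    ∃ κ₀ : ℝ, 0 < κ₀ ∧ κ₀ ≤ c / 4 ∧
      ∀ (κ T : ℝ) (h g : ℝ → EuclideanSpace ℝ (Fin d)),
        0 ≤ κ → κ ≤ κ₀ → 0 ≤ T →
        (∀ t ∈ Set.Icc 0 T, HasDerivAt h (R (h t) + g t) t) →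
        (∀ t ∈ Set.Icc 0 T, ‖g t‖ ≤ κ * ‖h t‖) →
        0 < ‖Pu (h 0)‖ ^ 2 - ‖Ps (h 0)‖ ^ 2 - ‖Pc (h 0)‖ ^ 2 →
        ∀ t ∈ Set.Icc 0 T,
          (∀ s ∈ Set.Icc 0 t,
            0 < ‖Pu (h s)‖ ^ 2 - ‖Ps (h s)‖ ^ 2 - ‖Pc (h s)‖ ^ 2) →
          Real.exp (c * t / 2) * (‖Pu (h 0)‖ ^ 2 - ‖Ps (h 0)‖ ^ 2 - ‖Pc (h 0)‖ ^ 2)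
              ≤ ‖Pu (h t)‖ ^ 2 - ‖Ps (h t)‖ ^ 2 - ‖Pc (h t)‖ ^ 2 ∧
          Real.exp (c * t / 2) * (‖Pu (h 0)‖ ^ 2 - ‖Ps (h 0)‖ ^ 2 - ‖Pc (h 0)‖ ^ 2)
              ≤ ‖Pu (h t)‖ ^ 2 := by
  -- pointwise versions of the operator identities
  have appu : ∀ x, Pu (Pu x) = Pu x := fun x => by
    simpa using ContinuousLinearMap.ext_iff.mp hPu x
  have apps : ∀ x, Ps (Ps x) = Ps x := fun x => by
    simpa using ContinuousLinearMap.ext_iff.mp hPs x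
  have appc : ∀ x, Pc (Pc x) = Pc x := fun x => by
    simpa using ContinuousLinearMap.ext_iff.mp hPc x
  have hPuPs : ∀ x, Pu (Ps x) = 0 := fun x => by
    simpa using ContinuousLinearMap.ext_iff.mp hus x
  have hPuPc : ∀ x, Pu (Pc x) = 0 := fun x => by
    simpa using ContinuousLinearMap.ext_iff.mp huc x
  have hPsPc : ∀ x, Ps (Pc x) = 0 := fun x => by
    simpa using ContinuousLinearMap.ext_iff.mp hsc x
  have hPsPu : ∀ x, Ps (Pu x) = 0 := fun x => by
    simpa using ContinuousLinearMap.ext_iff.mp hsu x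
  have hPcPu : ∀ x, Pc (Pu x) = 0 := fun x => by
    simpa using ContinuousLinearMap.ext_iff.mp hcu x
  have hPcPs : ∀ x, Pc (Ps x) = 0 := fun x => by
    simpa using ContinuousLinearMap.ext_iff.mp hcs x
  have hRPu : ∀ x, Pu (R x) = R (Pu x) := fun x =>
    (ContinuousLinearMap.ext_iff.mp hRu x).symm
  have hRPs : ∀ x, Ps (R x) = R (Ps x) := fun x =>
    (ContinuousLinearMap.ext_iff.mp hRs x).symm
  have hRPc : ∀ x, Pc (R x) = R (Pc x) := fun x =>
    (ContinuousLinearMap.ext_iff.mp hRc x).symm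
  -- orthogonality of the ranges
  have ouv : ∀ x y, ⟪Pu x, Ps y⟫ = 0 := fun x y => by
    rw [hPusa, hPuPs, inner_zero_right]
  have ouw : ∀ x y, ⟪Pu x, Pc y⟫ = 0 := fun x y => by
    rw [hPusa, hPuPc, inner_zero_right]
  have ovw : ∀ x y, ⟪Ps x, Pc y⟫ = 0 := fun x y => by
    rw [hPssa, hPsPc, inner_zero_right]
  have ovu : ∀ x y, ⟪Ps x, Pu y⟫ = 0 := fun x y => by
    rw [hPssa, hPsPu, inner_zero_right]
  have owu : ∀ x y, ⟪Pc x, Pu y⟫ = 0 := fun x y => by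
    rw [hPcsa, hPcPu, inner_zero_right]
  have owv : ∀ x y, ⟪Pc x, Ps y⟫ = 0 := fun x y => by
    rw [hPcsa, hPcPs, inner_zero_right]
  -- Pythagoras
  have hdecomp : ∀ x : EuclideanSpace ℝ (Fin d),
      ‖x‖ ^ 2 = ‖Pu x‖ ^ 2 + ‖Ps x‖ ^ 2 + ‖Pc x‖ ^ 2 := by
    intro x
    have hx : Pu x + Ps x + Pc x = x := by
      simpa using ContinuousLinearMap.ext_iff.mp hsum x
    have hexp : (⟪Pu x + Ps x + Pc x, Pu x + Ps x + Pc x⟫)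
        = ‖Pu x‖ ^ 2 + ‖Ps x‖ ^ 2 + ‖Pc x‖ ^ 2 := by
      simp only [inner_add_left, inner_add_right, real_inner_self_eq_norm_sq,
        ouv, ouw, ovw, ovu, owu, owv]
      ring
    rw [← real_inner_self_eq_norm_sq, ← hexp, hx]
  refine ⟨c / 8, by positivity, by linarith, ?_⟩
  intro κ T h g hκ0 hκ hT hderiv hg hΦ0 t ht hpos
  obtain ⟨ht0, htT⟩ := ht
  have hsub : Set.Icc (0:ℝ) t ⊆ Set.Icc 0 T := Set.Icc_subset_Icc le_rfl htT
  set Φ : ℝ → ℝ := fun s => ‖Pu (h s)‖ ^ 2 - ‖Ps (h s)‖ ^ 2 - ‖Pc (h s)‖ ^ 2 with hΦdef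
  set D : ℝ → ℝ := fun s =>
    2 * ⟪Pu (R (h s) + g s), Pu (h s)⟫ - 2 * ⟪Ps (R (h s) + g s), Ps (h s)⟫
      - 2 * ⟪Pc (R (h s) + g s), Pc (h s)⟫ with hDdef
  -- Φ is differentiable with derivative D on [0, t]
  have hΦD : ∀ s ∈ Set.Icc (0:ℝ) t, HasDerivAt Φ (D s) s := by
    intro s hmem
    have hh := hderiv s (hsub hmem)
    have du : HasDerivAt (fun r => Pu (h r)) (Pu (R (h s) + g s)) s :=
      Pu.hasFDerivAt.comp_hasDerivAt s hh
    have ds : HasDerivAt (fun r => Ps (h r)) (Ps (R (h s) + g s)) s :=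
      Ps.hasFDerivAt.comp_hasDerivAt s hh
    have dc : HasDerivAt (fun r => Pc (h r)) (Pc (R (h s) + g s)) s :=
      Pc.hasFDerivAt.comp_hasDerivAt s hh
    have qu : HasDerivAt (fun r => ‖Pu (h r)‖ ^ 2)
        (2 * ⟪Pu (R (h s) + g s), Pu (h s)⟫) s := by
      have := du.inner ℝ du
      simp only [real_inner_self_eq_norm_sq] at this
      exact this.congr_deriv (by rw [real_inner_comm]; ring)
    have qs : HasDerivAt (fun r => ‖Ps (h r)‖ ^ 2)
        (2 * ⟪Ps (R (h s) + g s), Ps (h s)⟫) s := by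
      have := ds.inner ℝ ds
      simp only [real_inner_self_eq_norm_sq] at this
      exact this.congr_deriv (by rw [real_inner_comm]; ring)
    have qc : HasDerivAt (fun r => ‖Pc (h r)‖ ^ 2)
        (2 * ⟪Pc (R (h s) + g s), Pc (h s)⟫) s := by
      have := dc.inner ℝ dc
      simp only [real_inner_self_eq_norm_sq] at this
      exact this.congr_deriv (by rw [real_inner_comm]; ring)
    exact (qu.sub qs).sub qc
  -- derivative bound
  have hbound : ∀ s ∈ Set.Icc (0:ℝ) t, c / 2 * Φ s ≤ D s := by
    intro s hmem
    have hφpos := hpos s hmem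
    have hgn := hg s (hsub hmem)
    have eu : ⟪Pu (R (h s) + g s), Pu (h s)⟫
        = ⟪R (Pu (h s)), Pu (h s)⟫ + ⟪g s, Pu (h s)⟫ := by
      rw [map_add, inner_add_left, hRPu]
      congr 1
      rw [hPusa, appu]
    have es : ⟪Ps (R (h s) + g s), Ps (h s)⟫
        = ⟪R (Ps (h s)), Ps (h s)⟫ + ⟪g s, Ps (h s)⟫ := by
      rw [map_add, inner_add_left, hRPs]
      congr 1
      rw [hPssa, apps]
    have ec : ⟪Pc (R (h s) + g s), Pc (h s)⟫ = ⟪g s, Pc (h s)⟫ := by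
      rw [map_add, inner_add_left, hRPc, hcz, inner_zero_left, zero_add]
      rw [hPcsa, appc]
    have key := stmt18_aux (iu := ⟪g s, Pu (h s)⟫) (iv := ⟪g s, Ps (h s)⟫)
      (iw := ⟪g s, Pc (h s)⟫) hc hκ0 hκ
      (norm_nonneg (Pu (h s))) (norm_nonneg (Ps (h s))) (norm_nonneg (Pc (h s)))
      (norm_nonneg (h s)) hφpos (hdecomp (h s)) hgn (norm_nonneg (g s))
      (hu (h s)) (hs (h s)) (abs_real_inner_le_norm _ _)
      (abs_real_inner_le_norm _ _) (abs_real_inner_le_norm _ _)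
    simp only [hDdef, hΦdef]
    rw [eu, es, ec]
    linarith [key]
  -- Gronwall via monotonicity of ψ
  set ψ : ℝ → ℝ := fun s => Real.exp (-(c / 2) * s) * Φ s with hψdef
  have hψD : ∀ s ∈ Set.Icc (0:ℝ) t,
      HasDerivAt ψ (Real.exp (-(c / 2) * s) * (D s - c / 2 * Φ s)) s := by
    intro s hmem
    have hlin : HasDerivAt (fun r : ℝ => -(c / 2) * r) (-(c / 2)) s := by
      simpa using (hasDerivAt_id s).const_mul (-(c / 2))
    have he : HasDerivAt (fun r => Real.exp (-(c / 2) * r))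
        (-(c / 2) * Real.exp (-(c / 2) * s)) s := by
      convert hlin.exp using 1
      ring
    have := he.mul (hΦD s hmem)
    exact this.congr_deriv (by ring)
  have hmono : MonotoneOn ψ (Set.Icc 0 t) := by
    apply monotoneOn_of_deriv_nonneg (convex_Icc 0 t)
    · exact fun s hmem => (hψD s hmem).continuousAt.continuousWithinAt
    · intro s hmem
      rw [interior_Icc] at hmem
      exact (hψD s (Set.Ioo_subset_Icc_self hmem)).differentiableAt.differentiableWithinAt
    · intro s hmem
      rw [interior_Icc] at hmem
      have hmem' := Set.Ioo_subset_Icc_self hmem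
      rw [(hψD s hmem').deriv]
      have := hbound s hmem'
      exact mul_nonneg (Real.exp_pos _).le (by linarith)
  have hψle : ψ 0 ≤ ψ t :=
    hmono ⟨le_rfl, ht0⟩ ⟨ht0, le_rfl⟩ ht0
  have h1 : Φ 0 ≤ Real.exp (-(c / 2) * t) * Φ t := by
    simpa [hψdef] using hψle
  have key : Real.exp (c * t / 2) * Φ 0 ≤ Φ t := by
    have h2 := mul_le_mul_of_nonneg_left h1 (Real.exp_nonneg (c * t / 2))
    calc Real.exp (c * t / 2) * Φ 0
        ≤ Real.exp (c * t / 2) * (Real.exp (-(c / 2) * t) * Φ t) := h2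
      _ = Real.exp (c * t / 2) * Real.exp (-(c / 2) * t) * Φ t := by ring
      _ = Real.exp (c * t / 2 + -(c / 2) * t) * Φ t := by rw [Real.exp_add]
      _ = Φ t := by
          rw [show c * t / 2 + -(c / 2) * t = 0 by ring, Real.exp_zero, one_mul]
  refine ⟨key, le_trans key ?_⟩
  have := sq_nonneg (‖Ps (h t)‖)
  have := sq_nonneg (‖Pc (h t)‖)
  simp only [hΦdef]
  linarith
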